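/- Let H be a real Hilbert space, T > 0, and C : [0,T] ⇉ H a Hausdorff-continuous set-valued map such that for every t ∈ [0,T] the set C(t) is closed and convex, has nonempty interior, and has bounded topological boundary. Then C satisfies condition (H4). -/

import Mathlib

open Set Metric
open scoped ENNReal RealInnerProductSpace

lemma erosion_lemma {H : Type*} [NormedAddCommGroup H] [InnerProductSpace ℝ H] [CompleteSpace H]
    {A S : Set H} (hA : IsClosed A) (hAc : Convex ℝ A) {ε σ : ℝ} (hε : 0 < ε) {z : H}
    (hball : ball z σ ⊆ S)
    (hd : EMetric.hausdorffEdist S A < ENNReal.ofReal ε) :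
    ball z (σ - ε) ⊆ A := by
  intro y hy
  rw [mem_ball, dist_eq_norm] at hy
  by_contra hyA
  have hzS : z ∈ S := hball (mem_ball_self (by linarith [norm_nonneg (y - z)]))
  have hAne : A.Nonempty := by
    rcases A.eq_empty_or_nonempty with h | h
    · rw [h, EMetric.hausdorffEdist, Metric.hausdorffEDist_empty ⟨z, hzS⟩] at hd
      exact absurd hd (not_top_lt)
    · exact h
  obtain ⟨p, hpA, hproj⟩ := exists_norm_eq_iInf_of_complete_convex hAne hA.isComplete hAc y
  have hperp : ∀ w ∈ A, ⟪y - p, w - p⟫ ≤ 0 :=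
    (norm_eq_iInf_iff_real_inner_le_zero hAc hpA).mp hproj
  have hd0 : 0 < ‖y - p‖ := by
    rw [norm_pos_iff, sub_ne_zero]
    rintro rfl; exact hyA hpA
  set d := ‖y - p‖ with hdd
  set w := y + (ε / d) • (y - p) with hw
  have hwS : w ∈ S := by
    apply hball
    rw [mem_ball, dist_eq_norm]
    have h1 : w - z = (y - z) + (ε / d) • (y - p) := by rw [hw]; abel
    have h2 : ‖(ε / d) • (y - p)‖ = ε := by
      rw [norm_smul, Real.norm_eq_abs, abs_of_nonneg (by positivity : (0:ℝ) ≤ ε / d), ← hdd,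
        div_mul_cancel₀ _ (ne_of_gt hd0)]
    calc ‖w - z‖ ≤ ‖y - z‖ + ‖(ε / d) • (y - p)‖ := by rw [h1]; exact norm_add_le _ _
      _ < σ := by rw [h2]; linarith
  obtain ⟨a, haA, hwa⟩ := EMetric.infEdist_lt_iff.mp
    ((EMetric.infEdist_le_hausdorffEdist_of_mem hwS).trans_lt hd)
  rw [edist_lt_ofReal, dist_eq_norm] at hwa
  have hperp' : 0 ≤ ⟪p - a, y - p⟫ := by
    have h := hperp a haA
    have : ⟪p - a, y - p⟫ = -⟪y - p, a - p⟫ := by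
      rw [← neg_sub a p, inner_neg_left, real_inner_comm]
    rw [this]; linarith
  have hinner : (d + ε) * d ≤ ⟪w - a, y - p⟫ := by
    have heq : w - a = (y - p) + (ε / d) • (y - p) + (p - a) := by rw [hw]; abel
    rw [heq, inner_add_left, inner_add_left, real_inner_smul_left,
      real_inner_self_eq_norm_mul_norm, ← hdd]
    have hεd : ε / d * (d * d) = ε * d := by field_simp
    nlinarith [hperp']
  have hCS : ⟪w - a, y - p⟫ ≤ ‖w - a‖ * d := by
    rw [hdd]; exact real_inner_le_norm _ _
  have : (d + ε) ≤ ‖w - a‖ := le_of_mul_le_mul_right (hinner.trans hCS) hd0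
  linarith

lemma ray_lemma {H : Type*} [NormedAddCommGroup H] [InnerProductSpace ℝ H]
    {B : Set H} (hB : IsClosed B) (hBc : Convex ℝ B) {c b : H} {M : ℝ}
    (hcB : c ∈ B) (hfr : frontier B ⊆ closedBall c M) (hbB : b ∈ B)
    (hM : M < ‖b - c‖) : ∀ t : ℝ, 0 ≤ t → c + t • (b - c) ∈ B := by
  intro t₀ ht₀
  by_contra hcon
  have ht01 : 1 < t₀ := by
    by_contra h
    push_neg at h
    have heq : c + t₀ • (b - c) = (1 - t₀) • c + t₀ • b := by module
    exact hcon (heq ▸ hBc hcB hbB (by linarith) ht₀ (by ring))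
  set K := Icc (0:ℝ) t₀ ∩ (fun t : ℝ => c + t • (b - c)) ⁻¹' B with hK
  have hKcl : IsClosed K := isClosed_Icc.inter (hB.preimage (by fun_prop))
  have hKcp : IsCompact K := isCompact_Icc.of_isClosed_subset hKcl inter_subset_left
  have h1K : (1:ℝ) ∈ K := ⟨⟨by norm_num, le_of_lt ht01⟩, by simp [hbB]⟩
  have hKne : K.Nonempty := ⟨1, h1K⟩
  set τ := sSup K with hτ
  have hτK : τ ∈ K := hKcp.sSup_mem hKne
  have hbdd : BddAbove K := hKcp.bddAbove
  have hτ1 : 1 ≤ τ := le_csSup hbdd h1K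
  have hτt₀ : τ < t₀ := lt_of_le_of_ne hτK.1.2 (fun heq => hcon (heq ▸ hτK.2))
  set p := c + τ • (b - c) with hp
  have hpB : p ∈ B := hτK.2
  have hpint : p ∈ interior B := by
    by_contra hpi
    have hpfr : p ∈ frontier B := by rw [hB.frontier_eq]; exact ⟨hpB, hpi⟩
    have h1 := hfr hpfr
    rw [mem_closedBall, dist_eq_norm] at h1
    have hpc : ‖p - c‖ = τ * ‖b - c‖ := by
      rw [hp, add_sub_cancel_left, norm_smul, Real.norm_eq_abs,
        abs_of_nonneg (by linarith : (0:ℝ) ≤ τ)]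
    nlinarith [norm_nonneg (b - c)]
  obtain ⟨η, hη, hballp⟩ := Metric.isOpen_iff.mp isOpen_interior p hpint
  have hbc1 : 0 < ‖b - c‖ + 1 := by positivity
  set t' := min t₀ (τ + η / (‖b - c‖ + 1)) with ht'
  have ht'τ : τ < t' := lt_min hτt₀ (by have := div_pos hη hbc1; linarith)
  have ht'K : t' ∈ K := by
    refine ⟨⟨by linarith, min_le_left _ _⟩, ?_⟩
    have hmem : c + t' • (b - c) ∈ ball p η := by
      rw [mem_ball, dist_eq_norm]
      have heq : c + t' • (b - c) - p = (t' - τ) • (b - c) := by rw [hp]; module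
      rw [heq, norm_smul, Real.norm_eq_abs, abs_of_nonneg (by linarith)]
      have h1 : t' - τ ≤ η / (‖b - c‖ + 1) := by
        have := min_le_right t₀ (τ + η / (‖b - c‖ + 1)); linarith
      calc (t' - τ) * ‖b - c‖ ≤ (η / (‖b - c‖ + 1)) * ‖b - c‖ :=
            mul_le_mul_of_nonneg_right h1 (norm_nonneg _)
        _ < η := by
            rw [div_mul_eq_mul_div, div_lt_iff₀ hbc1]
            nlinarith [norm_nonneg (b - c)]
    rw [mem_preimage]
    exact interior_subset (hballp hmem)
  exact absurd (le_csSup hbdd ht'K) (not_le.mpr ht'τ)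

lemma bd_bound {H : Type*} [NormedAddCommGroup H] [InnerProductSpace ℝ H] [CompleteSpace H]
    {A B : Set H} (hA : IsClosed A) (hAc : Convex ℝ A) (hB : IsClosed B) (hBc : Convex ℝ B)
    {c : H} {ρ ε M : ℝ} (hε : 0 < ε) (hρ : 4 * ε ≤ ρ)
    (hball : ball c ρ ⊆ B) (hfr : frontier B ⊆ closedBall c M)
    (hd : EMetric.hausdorffEdist A B < ENNReal.ofReal ε) :
    frontier A ⊆ closedBall c (M + ε) := by
  intro x hx
  have hxA : x ∈ A := hA.frontier_subset hx
  by_contra hcon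
  rw [mem_closedBall, dist_eq_norm, not_le] at hcon
  obtain ⟨b, hbB, hxb⟩ := EMetric.infEdist_lt_iff.mp
    ((EMetric.infEdist_le_hausdorffEdist_of_mem hxA).trans_lt hd)
  rw [edist_lt_ofReal, dist_eq_norm] at hxb
  have hcB : c ∈ B := hball (mem_ball_self (by linarith))
  have hMb : M < ‖b - c‖ := by
    have htri : ‖x - c‖ ≤ ‖x - b‖ + ‖b - c‖ := norm_sub_le_norm_sub_add_norm_sub x b c
    linarith
  have hray := ray_lemma hB hBc hcB hfr hbB hMb
  have hballb : ball b (7 / 8 * ρ) ⊆ B := by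
    intro y hy
    rw [mem_ball, dist_eq_norm] at hy
    have h16 : c + (16 : ℝ) • (b - c) ∈ B := hray 16 (by norm_num)
    have hwB : c + (16 / 15 : ℝ) • (y - b) ∈ B := by
      apply hball
      rw [mem_ball, dist_eq_norm, add_sub_cancel_left, norm_smul, Real.norm_eq_abs]
      rw [abs_of_nonneg (by norm_num : (0:ℝ) ≤ 16 / 15)]
      nlinarith
    have hmem := hBc hwB h16 (by norm_num : (0:ℝ) ≤ 15 / 16)
      (by norm_num : (0:ℝ) ≤ 1 / 16) (by norm_num)
    have heq : (15 / 16 : ℝ) • (c + (16 / 15 : ℝ) • (y - b)) +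
        (1 / 16 : ℝ) • (c + (16 : ℝ) • (b - c)) = y := by module
    rwa [heq] at hmem
  have hballx : ball x (7 / 8 * ρ - ε) ⊆ B := by
    intro y hy
    rw [mem_ball, dist_eq_norm] at hy
    apply hballb
    rw [mem_ball, dist_eq_norm]
    have htri : ‖y - b‖ ≤ ‖y - x‖ + ‖x - b‖ := norm_sub_le_norm_sub_add_norm_sub y x b
    linarith
  have hsub : ball x (7 / 8 * ρ - ε - ε) ⊆ A :=
    erosion_lemma hA hAc hε hballx (by unfold EMetric.hausdorffEdist at *; rwa [Metric.hausdorffEDist_comm])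
  have hxint : x ∈ interior A :=
    interior_maximal hsub isOpen_ball (mem_ball_self (by linarith))
  rw [hA.frontier_eq] at hx
  exact hx.2 hxint

/-- A set-valued map is Hausdorff-continuous on `[0,T]`. -/
def HausdorffCts {H : Type*} [NormedAddCommGroup H] (T : ℝ) (C : ℝ → Set H) : Prop :=
  ∀ ε > 0, ∃ δ > 0, ∀ s ∈ Icc (0:ℝ) T, ∀ t ∈ Icc (0:ℝ) T, |s - t| < δ →
    EMetric.hausdorffEdist (C s) (C t) < ENNReal.ofReal ε

/-- Condition (H4) with constants `r, L`. -/
def CondH4 {H : Type*} [NormedAddCommGroup H] [InnerProductSpace ℝ H]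
    (T : ℝ) (C : ℝ → Set H) (r L : ℝ) : Prop :=
  ∀ t ∈ Icc (0:ℝ) T, ∀ x ∈ frontier (C t), ∃ z : H,
    convexHull ℝ ({x} ∪ ball z (2 * r)) ⊆ C t ∧ ‖z - x‖ ≤ L * r

theorem stmt3 {H : Type*} [NormedAddCommGroup H] [InnerProductSpace ℝ H] [CompleteSpace H]
    (T : ℝ) (hT : 0 < T) (C : ℝ → Set H)
    (hH : HausdorffCts T C)
    (hclosed : ∀ t ∈ Icc (0:ℝ) T, IsClosed (C t))
    (hconv : ∀ t ∈ Icc (0:ℝ) T, Convex ℝ (C t))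
    (hint : ∀ t ∈ Icc (0:ℝ) T, (interior (C t)).Nonempty)
    (hbd : ∀ t ∈ Icc (0:ℝ) T, Bornology.IsBounded (frontier (C t))) :
    ∃ r > 0, ∃ L > 0, CondH4 T C r L := by
  have key : ∀ t ∈ Icc (0:ℝ) T, ∃ c : H, ∃ ρ : ℝ, ∃ M : ℝ, ∃ δ : ℝ, 0 < ρ ∧ 0 ≤ M ∧ 0 < δ ∧
      ball c ρ ⊆ C t ∧ frontier (C t) ⊆ closedBall c M ∧
      ∀ s ∈ Icc (0:ℝ) T, |s - t| < δ →
        EMetric.hausdorffEdist (C s) (C t) < ENNReal.ofReal (ρ / 4) := by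
    intro t ht
    obtain ⟨c, hc⟩ := hint t ht
    obtain ⟨ρ, hρ0, hball⟩ := Metric.isOpen_iff.mp isOpen_interior c hc
    obtain ⟨M₀, hM₀⟩ := (hbd t ht).subset_closedBall c
    obtain ⟨δ, hδ0, hδ⟩ := hH (ρ / 4) (by positivity)
    exact ⟨c, ρ, max M₀ 0, δ, hρ0, le_max_right _ _, hδ0, hball.trans interior_subset,
      hM₀.trans (closedBall_subset_closedBall (le_max_left _ _)),
      fun s hs hst => hδ s hs t ht hst⟩
  choose! c ρ M δ hρ hM hδ hball hfr hHd using key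
  obtain ⟨F, hFsub, hFfin, hFcov⟩ := isCompact_Icc.elim_finite_subcover_image
    (fun i (_ : i ∈ Icc (0:ℝ) T) => isOpen_ball (x := i) (ε := δ i))
    (fun s hs => mem_biUnion hs (mem_ball_self (hδ s hs)))
  have h0T : (0:ℝ) ∈ Icc (0:ℝ) T := ⟨le_refl 0, le_of_lt hT⟩
  obtain ⟨i₀, hi₀F, _⟩ := mem_iUnion₂.mp (hFcov h0T)
  set Fn := hFfin.toFinset with hFn
  have hmemFn : ∀ {i : ℝ}, i ∈ Fn ↔ i ∈ F := fun {i} => hFfin.mem_toFinset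
  have hFnne : Fn.Nonempty := ⟨i₀, hmemFn.mpr hi₀F⟩
  set r := Fn.inf' hFnne (fun i => 3 / 8 * ρ i) with hr
  set R := Fn.sup' hFnne (fun i => M i + ρ i) with hR
  have hrpos : 0 < r := by
    rw [hr, Finset.lt_inf'_iff]
    intro i hi
    have := hρ i (hFsub (hmemFn.mp hi))
    linarith
  have hRpos : 0 < R := by
    have h1 : M i₀ + ρ i₀ ≤ R := by rw [hR]; exact Finset.le_sup' (fun j => M j + ρ j) (hmemFn.mpr hi₀F)
    have h2 := hρ i₀ (hFsub hi₀F)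
    have h3 := hM i₀ (hFsub hi₀F)
    linarith
  refine ⟨r, hrpos, R / r, div_pos hRpos hrpos, ?_⟩
  intro s hs x hx
  obtain ⟨i, hiF, hsi⟩ := mem_iUnion₂.mp (hFcov hs)
  have hiI : i ∈ Icc (0:ℝ) T := hFsub hiF
  have hiFn : i ∈ Fn := hmemFn.mpr hiF
  have hρi := hρ i hiI
  have hdist : |s - i| < δ i := by rw [← Real.dist_eq]; exact mem_ball.mp hsi
  have hedist := hHd i hiI s hs hdist
  have hCsc := hconv s hs
  have hCscl := hclosed s hs
  have hball1 : ball (c i) (ρ i - ρ i / 4) ⊆ C s :=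
    erosion_lemma hCscl hCsc (by positivity) (hball i hiI)
      (by unfold EMetric.hausdorffEdist at *; rwa [Metric.hausdorffEDist_comm])
  have hfrs : frontier (C s) ⊆ closedBall (c i) (M i + ρ i / 4) :=
    bd_bound hCscl hCsc (hclosed i hiI) (hconv i hiI) (by positivity)
      (by linarith) (hball i hiI) (hfr i hiI) hedist
  refine ⟨c i, ?_, ?_⟩
  · apply convexHull_min _ hCsc
    rw [union_subset_iff, singleton_subset_iff]
    refine ⟨hCscl.frontier_subset hx, ?_⟩
    refine (ball_subset_ball ?_).trans hball1
    have h1 : r ≤ 3 / 8 * ρ i := by rw [hr]; exact Finset.inf'_le (fun j => 3 / 8 * ρ j) hiFn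
    linarith
  · have h1 : ‖c i - x‖ ≤ M i + ρ i / 4 := by
      have h2 := hfrs hx
      rw [mem_closedBall, dist_eq_norm] at h2
      rwa [norm_sub_rev]
    have h2 : M i + ρ i ≤ R := by rw [hR]; exact Finset.le_sup' (fun j => M j + ρ j) hiFn
    have h3 : R / r * r = R := div_mul_cancel₀ R (ne_of_gt hrpos)
    linarith
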